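/- Let R be a commutative ring, m ≥ 1, x_1,…,x_m ∈ R. Then Π_{ε ∈ {0,1}^m} det B_ε = (x_1⋯x_m)^{2^m} · Π_{∅ ≠ S ⊆ {1,…,m}} (1 − Σ_{i∈S} x_i), where B_ε is the m×m matrix with (i,i) entry x_i(1 − ε_i x_i) and (i,k) entry −ε_i x_i x_k for k ≠ i. (This product is the defining polynomial of the projection of V(L_1^A,…,L_m^A) ∖ {ξ = 0}, which gives the singular locus of Lauricella's system I_A(m).) -/

import Mathlib

/-- The matrix `B_ε` of the linear system coming from the `(0,1)`-initial forms `L_i^A`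
of Lauricella's `F_A` system: the `(i,i)` entry is `x_i(1 − ε_i x_i)` and the `(i,k)`
entry for `k ≠ i` is `−ε_i x_i x_k`, where `ε ∈ {0,1}^m`. -/
def BMat {R : Type*} [CommRing R] {m : ℕ} (x : Fin m → R) (ε : Fin m → Bool) :
    Matrix (Fin m) (Fin m) R :=
  Matrix.of fun i j =>
    if i = j then x i * (1 - (if ε i then x i else 0)) else -(if ε i then x i * x j else 0)

lemma BMat_eq {R : Type*} [CommRing R] {m : ℕ} (x : Fin m → R) (ε : Fin m → Bool) :
    BMat x ε = Matrix.diagonal x *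
      (1 + Matrix.replicateCol (Fin 1) (fun i => -(if ε i then (1:R) else 0)) * Matrix.replicateRow (Fin 1) x) := by
  ext i j
  simp only [BMat, Matrix.of_apply, Matrix.mul_apply, Matrix.diagonal, Matrix.add_apply,
    Matrix.one_apply, Matrix.replicateCol_apply, Matrix.replicateRow_apply, Matrix.of_apply]
  rw [Finset.sum_eq_single i]
  · by_cases h : i = j <;> by_cases hε : ε i <;> simp [h, hε, Matrix.mul_apply] <;> ring
  · intro b _ hb; simp [hb.symm]
  · simp

lemma BMat_det {R : Type*} [CommRing R] {m : ℕ} (x : Fin m → R) (ε : Fin m → Bool) :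
    (BMat x ε).det =
      (∏ i, x i) * (1 - ∑ i ∈ Finset.univ.filter (fun i => ε i), x i) := by
  rw [BMat_eq, Matrix.det_mul, Matrix.det_diagonal]
  erw [Matrix.det_one_add_replicateCol_mul_replicateRow (ι := Fin 1)]
  rw [dotProduct, sub_eq_add_neg, ← Finset.sum_neg_distrib, Finset.sum_filter]
  congr 1
  congr 1
  apply Finset.sum_congr rfl
  intro i _
  by_cases hε : ε i <;> simp [hε]

/-- The product of the determinants `det B_ε` over all `ε ∈ {0,1}^m` equals
`(x_1⋯x_m)^{2^m} ⋅ Π_{∅≠S⊆{1,…,m}} (1 − Σ_{i∈S} x_i)`; this is the defining polynomial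
of the projection of `V(L_1^A,…,L_m^A) ∖ {ξ = 0}` for Lauricella's system `I_A(m)`. -/
theorem prod_BMat_det {R : Type*} [CommRing R] (m : ℕ) (hm : 1 ≤ m) (x : Fin m → R) :
    ∏ ε : Fin m → Bool, (BMat x ε).det =
      (∏ i, x i) ^ (2 ^ m) *
        ∏ S ∈ (Finset.univ : Finset (Fin m)).powerset.filter (fun S => S.Nonempty),
          (1 - ∑ i ∈ S, x i) := by
  have h1 : ∏ ε : Fin m → Bool, (BMat x ε).det =
      (∏ i, x i) ^ (2 ^ m) * ∏ ε : Fin m → Bool,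
        (1 - ∑ i ∈ Finset.univ.filter (fun i => ε i), x i) := by
    rw [show ∏ ε : Fin m → Bool, (BMat x ε).det =
        ∏ ε : Fin m → Bool, ((∏ i, x i) *
          (1 - ∑ i ∈ Finset.univ.filter (fun i => ε i), x i)) from
      Finset.prod_congr rfl fun ε _ => BMat_det x ε, Finset.prod_mul_distrib,
      Finset.prod_const, Finset.card_univ]
    simp
  rw [h1]
  congr 1
  -- reindex ε ↦ {i | ε i}
  have h2 : ∏ ε : Fin m → Bool, (1 - ∑ i ∈ Finset.univ.filter (fun i => ε i), x i) =
      ∏ S ∈ (Finset.univ : Finset (Fin m)).powerset, (1 - ∑ i ∈ S, x i) := by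
    apply Finset.prod_nbij (fun ε => Finset.univ.filter (fun i => ε i))
    · intro ε _; simp
    · intro ε _ ε' _ h
      funext i
      have := congrArg (i ∈ ·) h
      simpa using this
    · intro S hS
      refine ⟨fun i => i ∈ S, by simp, ?_⟩
      ext i; simp
    · intro ε _; rfl
  rw [h2, ← Finset.prod_filter_mul_prod_filter_not _ (fun S => S.Nonempty)]
  have h3 : ∏ S ∈ (Finset.univ : Finset (Fin m)).powerset.filter (fun S => ¬S.Nonempty),
      (1 - ∑ i ∈ S, x i) = 1 := by
    apply Finset.prod_eq_one
    intro S hS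
    simp only [Finset.mem_filter, Finset.not_nonempty_iff_eq_empty] at hS
    simp [hS.2]
  rw [h3, mul_one]
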